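/- Fix m ≥ 3 and let μ ∈ Opt(m). If z ∈ (0, 1) satisfies 1 − (m/2)·z > (1 − z)^m, then μ̄(x) > z for every x ∈ supp μ̄. -/

import Mathlib

open Finset

/-- The cyclic successor of an index in `Fin m`. -/
def cnext {m : ℕ} (i : Fin m) : Fin m := ⟨(i.1 + 1) % m, Nat.mod_lt _ i.pos⟩

/-- `μ` is a probability mass on the 2-element subsets of `X`: it is nonnegative,
vanishes on the diagonal, and has total mass 1. -/
def IsProbMass {X : Type*} [Fintype X] [DecidableEq X] (μ : Sym2 X → ℝ) : Prop :=
  (∀ e, 0 ≤ μ e) ∧ (∀ e : Sym2 X, e.IsDiag → μ e = 0) ∧ (∑ e : Sym2 X, μ e) = 1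

/-- The weight `μ(C)` of the labeled cycle `f 0, f 1, ..., f (m-1), f 0`. -/
def cycleWeight {X : Type*} (μ : Sym2 X → ℝ) {m : ℕ} (f : Fin m → X) : ℝ :=
  ∏ i : Fin m, μ s(f i, f (cnext i))

/-- `β(μ; m)`: the sum of `μ(C)` over all unlabeled `m`-cycles `C` in the complete
graph on `X`, computed as the sum over labeled cycles divided by `2m` (each unlabeled
`m`-cycle has exactly `2m` labelings). -/
noncomputable def beta {X : Type*} [Fintype X] [DecidableEq X] (μ : Sym2 X → ℝ) (m : ℕ) : ℝ :=
  (∑ f : Fin m → X, if Function.Injective f then cycleWeight μ f else 0) / (2 * m)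

/-- `β(m)`: the supremum of `β(μ; m)` over all probability masses `μ` on the
2-element subsets of a finite set (every finite set being a copy of some `Fin n`). -/
noncomputable def betaSup (m : ℕ) : ℝ :=
  sSup {b : ℝ | ∃ (n : ℕ) (μ : Sym2 (Fin n) → ℝ), IsProbMass μ ∧ b = beta μ m}

/-- The weighted degree `μ̄(x) = ∑_{y ≠ x} μ(xy)`. -/
noncomputable def wdeg {X : Type*} [Fintype X] [DecidableEq X] (μ : Sym2 X → ℝ) (x : X) : ℝ :=
  ∑ y ∈ Finset.univ.filter (· ≠ x), μ s(x, y)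

/-- The support graph `G_μ`, whose edges are the pairs of positive mass. -/
def supportGraph {X : Type*} (μ : Sym2 X → ℝ) : SimpleGraph X where
  Adj x y := x ≠ y ∧ 0 < μ s(x, y)
  symm := ⟨fun x y h => ⟨h.1.symm, by rw [Sym2.eq_swap]; exact h.2⟩⟩
  loopless := ⟨fun x h => h.1 rfl⟩

section Aux

variable {m : ℕ} {X : Type*}

def cprev {m : ℕ} (i : Fin m) : Fin m := ⟨(i.1 + (m - 1)) % m, Nat.mod_lt _ i.pos⟩

lemma cnext_cprev (i : Fin m) : cnext (cprev i) = i := by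
  have hm : 0 < m := i.pos
  apply Fin.ext
  show ((i.1 + (m - 1)) % m + 1) % m = i.1
  rw [Nat.mod_add_mod]
  have h : i.1 + (m - 1) + 1 = i.1 + m := by omega
  rw [h, Nat.add_mod_right, Nat.mod_eq_of_lt i.2]

lemma cprev_cnext (i : Fin m) : cprev (cnext i) = i := by
  have hm : 0 < m := i.pos
  apply Fin.ext
  show ((i.1 + 1) % m + (m - 1)) % m = i.1
  rw [Nat.mod_add_mod]
  have h : i.1 + 1 + (m - 1) = i.1 + m := by omega
  rw [h, Nat.add_mod_right, Nat.mod_eq_of_lt i.2]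

lemma cnext_ne (hm : 2 ≤ m) (i : Fin m) : cnext i ≠ i := by
  intro h
  have h' : (i.1 + 1) % m = i.1 := congrArg Fin.val h
  have hi := i.2
  rcases Nat.lt_or_ge (i.1 + 1) m with h2 | h2
  · rw [Nat.mod_eq_of_lt h2] at h'; omega
  · have h3 : i.1 + 1 = m := by omega
    rw [h3, Nat.mod_self] at h'
    omega

lemma cnext_cnext_ne (hm : 3 ≤ m) (i : Fin m) : cnext (cnext i) ≠ i := by
  intro h
  have h' : ((i.1 + 1) % m + 1) % m = i.1 := congrArg Fin.val h
  rw [Nat.mod_add_mod] at h'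
  have hi := i.2
  rcases Nat.lt_or_ge (i.1 + 1 + 1) m with h2 | h2
  · rw [Nat.mod_eq_of_lt h2] at h'; omega
  · have h3 : i.1 + 1 + 1 - m < m := by omega
    rw [Nat.mod_eq_sub_mod h2, Nat.mod_eq_of_lt h3] at h'
    omega

def edgeF {m : ℕ} {X : Type*} (f : Fin m → X) (i : Fin m) : Sym2 X := s(f i, f (cnext i))

lemma edgeF_injective (hm : 3 ≤ m) {f : Fin m → X} (hf : Function.Injective f) :
    Function.Injective (edgeF f) := by
  intro i j h
  rw [edgeF, edgeF, Sym2.eq_iff] at h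
  rcases h with ⟨h1, _⟩ | ⟨h1, h2⟩
  · exact hf h1
  · have e1 : i = cnext j := hf h1
    have e2 : cnext i = j := hf h2
    exact absurd (by rw [← e1]; exact e2) (cnext_cnext_ne hm j)

lemma edgeF_cancel (hm : 3 ≤ m) {f g : Fin m → X} (hf : Function.Injective f)
    (hg : Function.Injective g) (h : edgeF f = edgeF g) : f = g := by
  funext i
  by_contra hne
  have h1 := congrFun h i
  have h2 := congrFun h (cprev i)
  rw [edgeF, edgeF, Sym2.eq_iff] at h1 h2
  rw [cnext_cprev] at h2
  rcases h1 with ⟨ha, _⟩ | ⟨ha, hb⟩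
  · exact hne ha
  · rcases h2 with ⟨_, hc⟩ | ⟨hc, hd⟩
    · exact hne hc
    · have hgg : g (cprev i) = g (cnext i) := by rw [← hd, ha]
      have hpc : cprev i = cnext i := hg hgg
      have hcc := cnext_cprev i
      rw [hpc] at hcc
      exact cnext_cnext_ne hm i hcc

end Aux

section Aux2
variable {m : ℕ} {X : Type*} [Fintype X] [DecidableEq X]

noncomputable def cycS (μ : Sym2 X → ℝ) (m : ℕ) : ℝ :=
  ∑ f : Fin m → X, if Function.Injective f then cycleWeight μ f else 0

lemma beta_eq (μ : Sym2 X → ℝ) (m : ℕ) : beta μ m = cycS μ m / (2 * m) := rfl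

lemma cycleWeight_eq (μ : Sym2 X → ℝ) (f : Fin m → X) :
    cycleWeight μ f = ∏ i, μ (edgeF f i) := rfl

lemma cycleWeight_nonneg {μ : Sym2 X → ℝ} (h0 : ∀ e, 0 ≤ μ e) (f : Fin m → X) :
    0 ≤ cycleWeight μ f :=
  Finset.prod_nonneg fun _ _ => h0 _

lemma cycS_term_nonneg {μ : Sym2 X → ℝ} (h0 : ∀ e, 0 ≤ μ e) (f : Fin m → X) :
    0 ≤ if Function.Injective f then cycleWeight μ f else 0 := by
  split
  · exact cycleWeight_nonneg h0 f
  · exact le_refl 0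

lemma cycS_nonneg {μ : Sym2 X → ℝ} (h0 : ∀ e, 0 ≤ μ e) (m : ℕ) : 0 ≤ cycS μ m :=
  Finset.sum_nonneg fun f _ => cycS_term_nonneg h0 f

lemma cycS_le_one (hm : 3 ≤ m) {μ : Sym2 X → ℝ} (hμ : IsProbMass μ) : cycS μ m ≤ 1 := by
  obtain ⟨h0, _, hsum⟩ := hμ
  have key : cycS μ m =
      ∑ F ∈ (univ.filter (fun f : Fin m → X => Function.Injective f)).image edgeF,
        ∏ i, μ (F i) := by
    rw [cycS, ← Finset.sum_filter]
    rw [Finset.sum_image (fun f hf g hg h => edgeF_cancel hm (Finset.mem_filter.1 hf).2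
      (Finset.mem_filter.1 hg).2 h)]
    exact Finset.sum_congr rfl fun f _ => (cycleWeight_eq μ f)
  rw [key]
  calc ∑ F ∈ (univ.filter (fun f : Fin m → X => Function.Injective f)).image edgeF, ∏ i, μ (F i)
      ≤ ∑ F : Fin m → Sym2 X, ∏ i, μ (F i) :=
        Finset.sum_le_sum_of_subset_of_nonneg (Finset.subset_univ _)
          (fun F _ _ => Finset.prod_nonneg fun _ _ => h0 _)
    _ = (∑ e : Sym2 X, μ e) ^ m := (Fintype.sum_pow μ m).symm
    _ = 1 := by rw [hsum, one_pow]

lemma sum_ite_mem_eq_wdeg (μ : Sym2 X → ℝ) (hdiag : ∀ e : Sym2 X, e.IsDiag → μ e = 0) (x : X) :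
    ∑ e : Sym2 X, (if x ∈ e then μ e else 0) = wdeg μ x := by
  have himg : univ.filter (fun e : Sym2 X => x ∈ e) = univ.image (fun y => s(x, y)) := by
    ext e
    simp only [Finset.mem_filter, Finset.mem_univ, true_and, Finset.mem_image]
    constructor
    · intro he
      obtain ⟨y, hy⟩ := Sym2.mem_iff_exists.1 he
      exact ⟨y, hy.symm⟩
    · rintro ⟨y, rfl⟩
      exact Sym2.mem_mk_left x y
  have hinj : ∀ y ∈ (univ : Finset X), ∀ y' ∈ (univ : Finset X),
      s(x, y) = s(x, y') → y = y' := by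
    intro y _ y' _ h
    rcases Sym2.eq_iff.1 h with ⟨_, h2⟩ | ⟨h1, h2⟩
    · exact h2
    · rw [h2, ← h1]
  rw [← Finset.sum_filter, himg, Finset.sum_image hinj]
  have hsplit : (univ : Finset X) = insert x (univ.filter (· ≠ x)) := by
    ext y
    simp only [Finset.mem_univ, Finset.mem_insert, Finset.mem_filter, true_iff, true_and]
    by_cases h : y = x
    · exact Or.inl h
    · exact Or.inr h
  rw [hsplit, Finset.sum_insert (by simp), hdiag _ (by simp), zero_add, wdeg]

end Aux2

section Aux3
variable {m : ℕ} {X : Type*} [Fintype X] [DecidableEq X]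

/-- The equivalence `Sym2 X ≃ Sym2 Y` induced by `σ : X ≃ Y`. -/
def sym2Congr {Y : Type*} (σ : X ≃ Y) : Sym2 X ≃ Sym2 Y where
  toFun := Sym2.map σ
  invFun := Sym2.map σ.symm
  left_inv := fun e => by
    rw [Sym2.map_map]
    have : (⇑σ.symm ∘ ⇑σ) = id := by funext a; simp
    rw [this, Sym2.map_id, id_eq]
  right_inv := fun e => by
    rw [Sym2.map_map]
    have : (⇑σ ∘ ⇑σ.symm) = id := by funext a; simp
    rw [this, Sym2.map_id, id_eq]

lemma isProbMass_comp {n : ℕ} (σ : X ≃ Fin n) {ν : Sym2 X → ℝ} (hν : IsProbMass ν) :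
    IsProbMass (fun E => ν (Sym2.map σ.symm E)) := by
  obtain ⟨h0, hd, hs⟩ := hν
  refine ⟨fun e => h0 _, fun e he => hd _ ((Sym2.isDiag_map σ.symm.injective).2 he), ?_⟩
  rw [← hs]
  exact Fintype.sum_equiv (sym2Congr σ).symm _ _ (fun E => rfl)

lemma beta_comp {n : ℕ} (σ : X ≃ Fin n) (ν : Sym2 X → ℝ) :
    beta (fun E => ν (Sym2.map σ.symm E)) m = beta ν m := by
  rw [beta_eq, beta_eq]
  congr 1
  rw [cycS, cycS]
  refine Fintype.sum_equiv (Equiv.arrowCongr (Equiv.refl (Fin m)) σ).symm _ _ (fun g => ?_)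
  -- g : Fin m → Fin n, (arrowCongr refl σ).symm g = σ.symm ∘ g
  have hg : ((Equiv.arrowCongr (Equiv.refl (Fin m)) σ).symm g) = ⇑σ.symm ∘ g := by
    funext i; simp [Equiv.arrowCongr]
  rw [hg]
  have hinj : Function.Injective g ↔ Function.Injective (⇑σ.symm ∘ g) :=
    (Function.Injective.of_comp_iff σ.symm.injective g).symm
  by_cases h : Function.Injective g
  · rw [if_pos h, if_pos (hinj.1 h)]
    unfold cycleWeight
    exact Finset.prod_congr rfl fun i _ => by simp [Sym2.map_pair_eq, Function.comp]
  · rw [if_neg h, if_neg (fun hc => h (hinj.2 hc))]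

lemma betaSet_bddAbove (hm : 3 ≤ m) :
    BddAbove {b : ℝ | ∃ (n : ℕ) (μ : Sym2 (Fin n) → ℝ), IsProbMass μ ∧ b = beta μ m} := by
  refine ⟨1, fun b hb => ?_⟩
  obtain ⟨n, ν, hν, rfl⟩ := hb
  rw [beta_eq]
  have hmR : (3:ℝ) ≤ m := by exact_mod_cast hm
  have h1 : cycS ν m ≤ 1 := cycS_le_one hm hν
  have h2 : (0:ℝ) < 2 * m := by linarith
  calc cycS ν m / (2 * m) ≤ 1 / (2 * m) := by gcongr
    _ ≤ 1 := by rw [div_le_one h2]; linarith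

lemma beta_le_opt (hm : 3 ≤ m) {μ : Sym2 X → ℝ}
    (hopt : beta μ m = betaSup m) {ν : Sym2 X → ℝ} (hν : IsProbMass ν) :
    beta ν m ≤ beta μ m := by
  rw [hopt]
  have σ := Fintype.equivFin X
  rw [← beta_comp σ ν]
  exact le_csSup (betaSet_bddAbove hm) ⟨Fintype.card X, _, isProbMass_comp σ hν, rfl⟩

lemma betaSup_pos (hm : 3 ≤ m) : 0 < betaSup m := by
  classical
  have hm2 : 2 ≤ m := by omega
  have hmR : (3:ℝ) ≤ m := by exact_mod_cast hm
  have hm0 : (0:ℝ) < m := by linarith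
  set S : Finset (Sym2 (Fin m)) := Finset.image (edgeF (id : Fin m → Fin m)) univ with hS
  set μ₀ : Sym2 (Fin m) → ℝ := fun e => if e ∈ S then (m:ℝ)⁻¹ else 0 with hμ₀
  have hinj : Function.Injective (edgeF (id : Fin m → Fin m)) :=
    edgeF_injective hm Function.injective_id
  have hcard : S.card = m := by
    rw [hS, Finset.card_image_of_injective _ hinj, Finset.card_univ, Fintype.card_fin]
  have hprob : IsProbMass μ₀ := by
    refine ⟨fun e => ?_, fun e he => ?_, ?_⟩
    · rw [hμ₀]; dsimp only; split
      · positivity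
      · exact le_refl 0
    · rw [hμ₀]; dsimp only
      rw [if_neg]
      intro hmem
      rw [hS, Finset.mem_image] at hmem
      obtain ⟨i, _, rfl⟩ := hmem
      rw [edgeF] at he
      simp only [id_eq, Sym2.mk_isDiag_iff] at he
      exact cnext_ne hm2 i he.symm
    · rw [hμ₀]
      dsimp only
      rw [Finset.sum_ite_mem, Finset.univ_inter, Finset.sum_const, hcard, nsmul_eq_mul]
      field_simp
  have hterm : (m:ℝ)⁻¹ ^ m =
      (if Function.Injective (id : Fin m → Fin m) then cycleWeight μ₀ id else 0) := by
    rw [if_pos Function.injective_id, cycleWeight_eq]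
    have : ∀ i ∈ (univ : Finset (Fin m)), μ₀ (edgeF (id : Fin m → Fin m) i) = (m:ℝ)⁻¹ := by
      intro i _
      rw [hμ₀]; dsimp only
      rw [if_pos (Finset.mem_image_of_mem _ (Finset.mem_univ i))]
    rw [Finset.prod_congr rfl this, Finset.prod_const, Finset.card_univ, Fintype.card_fin]
  have hle : (m:ℝ)⁻¹ ^ m / (2 * m) ≤ betaSup m := by
    refine le_trans ?_ (le_csSup (betaSet_bddAbove hm) ⟨m, μ₀, hprob, rfl⟩)
    rw [beta_eq]
    gcongr
    rw [hterm, cycS]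
    exact Finset.single_le_sum (fun f _ => cycS_term_nonneg hprob.1 f) (Finset.mem_univ id)
  have : (0:ℝ) < (m:ℝ)⁻¹ ^ m / (2 * m) := by positivity
  linarith

end Aux3

section Aux4
variable {m : ℕ} {X : Type*} [Fintype X] [DecidableEq X]

noncomputable def DW (μ : Sym2 X → ℝ) (e : Sym2 X) (f : Fin m → X) : ℝ :=
  if e ∈ Finset.image (edgeF f) univ then
    ∏ i ∈ univ.filter (fun i => edgeF f i ≠ e), μ (edgeF f i)
  else 0

noncomputable def De (μ : Sym2 X → ℝ) (m : ℕ) (e : Sym2 X) : ℝ :=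
  ∑ f : Fin m → X, if Function.Injective f then DW μ e f else 0

lemma DW_nonneg {μ : Sym2 X → ℝ} (h0 : ∀ e, 0 ≤ μ e) (e : Sym2 X) (f : Fin m → X) :
    0 ≤ DW μ e f := by
  rw [DW]; split
  · exact Finset.prod_nonneg fun _ _ => h0 _
  · exact le_refl 0

lemma filter_ne_eq_erase (hm : 3 ≤ m) {f : Fin m → X} (hf : Function.Injective f)
    {e : Sym2 X} {i₀ : Fin m} (hi₀ : edgeF f i₀ = e) :
    univ.filter (fun i => edgeF f i ≠ e) = univ.erase i₀ := by
  ext j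
  simp only [Finset.mem_filter, Finset.mem_univ, true_and, Finset.mem_erase, and_true]
  constructor
  · intro hj hji; exact hj (hji ▸ hi₀)
  · intro hj hcon
    exact hj (edgeF_injective hm hf (hcon.trans hi₀.symm))

lemma mul_DW {μ : Sym2 X → ℝ} (hm : 3 ≤ m) {f : Fin m → X} (hf : Function.Injective f)
    (e : Sym2 X) :
    μ e * DW μ e f =
      if e ∈ Finset.image (edgeF f) univ then cycleWeight μ f else 0 := by
  rw [DW]
  by_cases he : e ∈ Finset.image (edgeF f) univ
  · rw [if_pos he, if_pos he]
    obtain ⟨i₀, _, hi₀⟩ := Finset.mem_image.1 he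
    rw [filter_ne_eq_erase hm hf hi₀, cycleWeight_eq, ← hi₀]
    exact Finset.mul_prod_erase univ (fun i => μ (edgeF f i)) (Finset.mem_univ i₀)
  · rw [if_neg he, if_neg he, mul_zero]

lemma cycleWeight_nu {μ : Sym2 X → ℝ} (hm : 3 ≤ m) {f : Fin m → X}
    (hf : Function.Injective f) (e : Sym2 X) (t : ℝ) :
    cycleWeight (fun e' => (1 - t) * μ e' + (if e' = e then t else 0)) f =
      (1 - t) ^ m * cycleWeight μ f + t * (1 - t) ^ (m - 1) * DW μ e f := by
  set ν : Sym2 X → ℝ := fun e' => (1 - t) * μ e' + (if e' = e then t else 0) with hν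
  by_cases he : e ∈ Finset.image (edgeF f) univ
  · obtain ⟨i₀, _, hi₀⟩ := Finset.mem_image.1 he
    have herase : ∀ i ∈ univ.erase i₀, ν (edgeF f i) = (1 - t) * μ (edgeF f i) := by
      intro i hi
      have hne : edgeF f i ≠ e := by
        intro hcon
        exact (Finset.mem_erase.1 hi).1 (edgeF_injective hm hf (hcon.trans hi₀.symm))
      rw [hν]; dsimp only; rw [if_neg hne, add_zero]
    have hcardE : (univ.erase i₀).card = m - 1 := by
      rw [Finset.card_erase_of_mem (Finset.mem_univ i₀), Finset.card_univ, Fintype.card_fin]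
    have hprodE : ∏ i ∈ univ.erase i₀, ν (edgeF f i) =
        (1 - t) ^ (m - 1) * ∏ i ∈ univ.erase i₀, μ (edgeF f i) := by
      rw [Finset.prod_congr rfl herase, Finset.prod_mul_distrib, Finset.prod_const, hcardE]
    have hsplit : cycleWeight ν f = ν (edgeF f i₀) * ∏ i ∈ univ.erase i₀, ν (edgeF f i) := by
      rw [cycleWeight_eq]
      exact (Finset.mul_prod_erase univ _ (Finset.mem_univ i₀)).symm
    have hsplitμ : cycleWeight μ f = μ e * ∏ i ∈ univ.erase i₀, μ (edgeF f i) := by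
      rw [cycleWeight_eq, ← hi₀]
      exact (Finset.mul_prod_erase univ _ (Finset.mem_univ i₀)).symm
    have hν₀ : ν (edgeF f i₀) = (1 - t) * μ e + t := by
      rw [hν]; dsimp only; rw [hi₀, if_pos rfl]
    have hDW : DW μ e f = ∏ i ∈ univ.erase i₀, μ (edgeF f i) := by
      rw [DW, if_pos he, filter_ne_eq_erase hm hf hi₀]
    have hpow : (1 - t) ^ m = (1 - t) * (1 - t) ^ (m - 1) := by
      have h1 : m - 1 + 1 = m := by omega
      conv_lhs => rw [← h1]
      rw [pow_succ]
      ring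
    rw [hsplit, hprodE, hν₀, hsplitμ, hDW, hpow]
    ring
  · have hallne : ∀ i ∈ (univ : Finset (Fin m)), ν (edgeF f i) = (1 - t) * μ (edgeF f i) := by
      intro i _
      have hne : edgeF f i ≠ e := by
        intro hcon
        exact he (hcon ▸ Finset.mem_image_of_mem _ (Finset.mem_univ i))
      rw [hν]; dsimp only; rw [if_neg hne, add_zero]
    have hDW : DW μ e f = 0 := by rw [DW, if_neg he]
    rw [hDW, mul_zero, add_zero, cycleWeight_eq, Finset.prod_congr rfl hallne,
      Finset.prod_mul_distrib, Finset.prod_const, Finset.card_univ, Fintype.card_fin,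
      cycleWeight_eq]

lemma cycS_nu {μ : Sym2 X → ℝ} (hm : 3 ≤ m) (e : Sym2 X) (t : ℝ) :
    cycS (fun e' => (1 - t) * μ e' + (if e' = e then t else 0)) m =
      (1 - t) ^ m * cycS μ m + t * (1 - t) ^ (m - 1) * De μ m e := by
  rw [cycS, cycS, De, Finset.mul_sum, Finset.mul_sum, ← Finset.sum_add_distrib]
  refine Finset.sum_congr rfl fun f _ => ?_
  by_cases hf : Function.Injective f
  · rw [if_pos hf, if_pos hf, if_pos hf, cycleWeight_nu hm hf e t]
  · rw [if_neg hf, if_neg hf, if_neg hf, mul_zero, mul_zero, add_zero]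

lemma mul_De {μ : Sym2 X → ℝ} (hm : 3 ≤ m) (e : Sym2 X) :
    μ e * De μ m e = ∑ f : Fin m → X,
      if Function.Injective f ∧ e ∈ Finset.image (edgeF f) univ then cycleWeight μ f else 0 := by
  rw [De, Finset.mul_sum]
  refine Finset.sum_congr rfl fun f _ => ?_
  by_cases hf : Function.Injective f
  · rw [if_pos hf, mul_DW hm hf e]
    by_cases he : e ∈ Finset.image (edgeF f) univ
    · rw [if_pos he, if_pos ⟨hf, he⟩]
    · rw [if_neg he, if_neg (fun h => he h.2)]
  · rw [if_neg hf, mul_zero, if_neg (fun h => hf h.1)]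

lemma nu_probMass {μ : Sym2 X → ℝ} (hμ : IsProbMass μ) {e : Sym2 X} (hed : ¬ e.IsDiag)
    {t : ℝ} (ht0 : 0 ≤ t) (ht1 : t ≤ 1) :
    IsProbMass (fun e' => (1 - t) * μ e' + (if e' = e then t else 0)) := by
  obtain ⟨h0, hd, hs⟩ := hμ
  refine ⟨fun e' => ?_, fun e' he' => ?_, ?_⟩
  · have h1 : 0 ≤ (1 - t) * μ e' := mul_nonneg (by linarith) (h0 e')
    have h2 : (0:ℝ) ≤ if e' = e then t else 0 := by
      split
      · exact ht0
      · exact le_refl 0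
    dsimp only
    linarith
  · dsimp only
    rw [hd e' he', mul_zero, zero_add, if_neg (fun h => hed (by rw [← h]; exact he'))]
  · rw [Finset.sum_add_distrib, ← Finset.mul_sum, hs, Finset.sum_ite_eq' univ e (fun _ => t)]
    rw [if_pos (Finset.mem_univ e)]
    ring

end Aux4

section Aux5
variable {m : ℕ} {X : Type*} [Fintype X] [DecidableEq X]

lemma De_le (hm : 3 ≤ m) {μ : Sym2 X → ℝ} (hμ : IsProbMass μ)
    (hopt : beta μ m = betaSup m) {e : Sym2 X} (hed : ¬ e.IsDiag) :
    De μ m e ≤ m * cycS μ m := by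
  have h0 := hμ.1
  have hmR : (3:ℝ) ≤ (m:ℝ) := by exact_mod_cast hm
  have hS0 : 0 ≤ cycS μ m := cycS_nonneg h0 m
  set S := cycS μ m with hSdef
  set D := De μ m e with hDdef
  have key : ∀ t : ℝ, 0 ≤ t → t ≤ 1 →
      (1 - t) ^ m * S + t * (1 - t) ^ (m - 1) * D ≤ S := by
    intro t ht0 ht1
    have hprob := nu_probMass hμ hed ht0 ht1
    have hle := beta_le_opt hm hopt hprob
    rw [beta_eq, beta_eq, cycS_nu hm e t] at hle
    have h2m : (0:ℝ) < 2 * m := by linarith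
    calc (1 - t) ^ m * S + t * (1 - t) ^ (m - 1) * D
        = ((1 - t) ^ m * cycS μ m + t * (1 - t) ^ (m - 1) * De μ m e) := by rw [← hSdef, ← hDdef]
      _ ≤ S := by
          have := (div_le_div_iff₀ h2m h2m).1 (by exact hle)
          nlinarith [this]
  by_contra hcon
  push_neg at hcon
  have hmS0 : 0 ≤ (m:ℝ) * S := mul_nonneg (by linarith) hS0
  have hD0 : 0 < D := lt_of_le_of_lt hmS0 hcon
  set t := (D - m * S) / (2 * ((m:ℝ) - 1) * D) with ht
  have hc : (0:ℝ) < 2 * ((m:ℝ) - 1) * D := by nlinarith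
  have ht0 : 0 < t := div_pos (by linarith) hc
  have ht1 : t ≤ 1 := by
    rw [ht, div_le_one hc]
    nlinarith
  have hkey := key t (le_of_lt ht0) ht1
  have b1 : 1 - (m:ℝ) * t ≤ (1 - t) ^ m := by
    have h := one_add_mul_le_pow (a := -t) (by linarith) m
    rw [show (1:ℝ) + -t = 1 - t from by ring] at h
    linarith
  have hcast : ((m - 1 : ℕ) : ℝ) = (m:ℝ) - 1 := by
    rw [Nat.cast_sub (by omega)]
    norm_num
  have b2 : 1 - ((m:ℝ) - 1) * t ≤ (1 - t) ^ (m - 1) := by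
    have h := one_add_mul_le_pow (a := -t) (by linarith) (m - 1)
    rw [show (1:ℝ) + -t = 1 - t from by ring, hcast] at h
    linarith
  have step1 : (1 - (m:ℝ) * t) * S ≤ (1 - t) ^ m * S := mul_le_mul_of_nonneg_right b1 hS0
  have step2 : t * (1 - ((m:ℝ) - 1) * t) * D ≤ t * (1 - t) ^ (m - 1) * D := by
    apply mul_le_mul_of_nonneg_right _ (le_of_lt hD0)
    exact mul_le_mul_of_nonneg_left b2 (le_of_lt ht0)
  have step3 : (1 - (m:ℝ) * t) * S + t * (1 - ((m:ℝ) - 1) * t) * D ≤ S :=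
    le_trans (add_le_add step1 step2) hkey
  have h4 : t * ((1 - ((m:ℝ) - 1) * t) * D) ≤ t * ((m:ℝ) * S) := by nlinarith [step3]
  have h5 : (1 - ((m:ℝ) - 1) * t) * D ≤ (m:ℝ) * S := le_of_mul_le_mul_left h4 ht0
  have hterm : ((m:ℝ) - 1) * t * D = (D - (m:ℝ) * S) / 2 := by
    rw [ht]
    have hm1 : (m:ℝ) - 1 ≠ 0 := by linarith
    have hDne : D ≠ 0 := ne_of_gt hD0
    field_simp
  nlinarith [h5, hterm, hcon]

end Aux5

section Aux6
variable {m : ℕ} {X : Type*} [Fintype X] [DecidableEq X]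

lemma cycS_le_opt (hm : 3 ≤ m) {μ : Sym2 X → ℝ} (hopt : beta μ m = betaSup m)
    {ν : Sym2 X → ℝ} (hν : IsProbMass ν) : cycS ν m ≤ cycS μ m := by
  have hle := beta_le_opt hm hopt hν
  rw [beta_eq, beta_eq] at hle
  have hmR : (3:ℝ) ≤ (m:ℝ) := by exact_mod_cast hm
  have h2m : (0:ℝ) < 2 * m := by linarith
  have := (div_le_div_iff₀ h2m h2m).1 hle
  nlinarith [this]

noncomputable def Sx (μ : Sym2 X → ℝ) (m : ℕ) (x : X) : ℝ :=
  ∑ f : Fin m → X, if Function.Injective f ∧ x ∈ Set.range f then cycleWeight μ f else 0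

lemma deletion (hm : 3 ≤ m) {μ : Sym2 X → ℝ} (hμ : IsProbMass μ)
    (hopt : beta μ m = betaSup m) (x : X) (hd1 : wdeg μ x < 1) :
    (1 - (1 - wdeg μ x) ^ m) * cycS μ m ≤ Sx μ m x := by
  obtain ⟨h0, hdiag, htot⟩ := hμ
  set d := wdeg μ x with hd
  have hc : (0:ℝ) < 1 - d := by linarith
  set ν : Sym2 X → ℝ := fun e => if x ∈ e then 0 else (1 - d)⁻¹ * μ e with hν
  have hsum_mem : ∑ e : Sym2 X, (if x ∈ e then μ e else 0) = d := sum_ite_mem_eq_wdeg μ hdiag x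
  have hprob : IsProbMass ν := by
    refine ⟨fun e => ?_, fun e he => ?_, ?_⟩
    · rw [hν]; dsimp only; split
      · exact le_refl 0
      · exact mul_nonneg (by positivity) (h0 e)
    · rw [hν]; dsimp only; split
      · rfl
      · rw [hdiag e he, mul_zero]
    · have hcompl : ∑ e : Sym2 X, (if x ∈ e then (0:ℝ) else μ e) = 1 - d := by
        have hsplit : ∀ e : Sym2 X,
            (if x ∈ e then (0:ℝ) else μ e) = μ e - (if x ∈ e then μ e else 0) := by
          intro e; split <;> ring
        rw [Finset.sum_congr rfl (fun e _ => hsplit e), Finset.sum_sub_distrib, htot, hsum_mem]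
      calc ∑ e : Sym2 X, ν e = ∑ e : Sym2 X, (1 - d)⁻¹ * (if x ∈ e then (0:ℝ) else μ e) := by
            refine Finset.sum_congr rfl fun e _ => ?_
            rw [hν]; dsimp only; split
            · rw [mul_zero]
            · rfl
        _ = (1 - d)⁻¹ * (1 - d) := by rw [← Finset.mul_sum, hcompl]
        _ = 1 := inv_mul_cancel₀ (ne_of_gt hc)
  have hw : ∀ f : Fin m → X, Function.Injective f → cycleWeight ν f =
      if x ∈ Set.range f then 0 else (1 - d)⁻¹ ^ m * cycleWeight μ f := by
    intro f hf
    by_cases hxr : x ∈ Set.range f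
    · rw [if_pos hxr]
      obtain ⟨i₀, hi₀⟩ := hxr
      have hzero : ν (edgeF f i₀) = 0 := by
        rw [hν]; dsimp only
        rw [if_pos]
        rw [edgeF, hi₀]
        exact Sym2.mem_mk_left x _
      rw [cycleWeight_eq]
      exact Finset.prod_eq_zero (Finset.mem_univ i₀) hzero
    · rw [if_neg hxr]
      have hfac : ∀ i ∈ (univ : Finset (Fin m)), ν (edgeF f i) = (1 - d)⁻¹ * μ (edgeF f i) := by
        intro i _
        rw [hν]; dsimp only
        rw [if_neg]
        intro hmem
        rw [edgeF] at hmem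
        rcases Sym2.mem_iff.1 hmem with h | h
        · exact hxr ⟨i, h.symm⟩
        · exact hxr ⟨cnext i, h.symm⟩
      rw [cycleWeight_eq, Finset.prod_congr rfl hfac, Finset.prod_mul_distrib,
        Finset.prod_const, Finset.card_univ, Fintype.card_fin, cycleWeight_eq]
  have hcycS : cycS ν m = (1 - d)⁻¹ ^ m * (cycS μ m - Sx μ m x) := by
    have hthis : cycS ν m = ∑ f : Fin m → X,
        ((1 - d)⁻¹ ^ m * (if Function.Injective f then cycleWeight μ f else 0) -
          (1 - d)⁻¹ ^ m *
            (if Function.Injective f ∧ x ∈ Set.range f then cycleWeight μ f else 0)) := by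
      rw [cycS]
      refine Finset.sum_congr rfl fun f _ => ?_
      by_cases hf : Function.Injective f
      · rw [if_pos hf, hw f hf]
        by_cases hxr : x ∈ Set.range f
        · rw [if_pos hxr, if_pos (show Function.Injective f ∧ x ∈ Set.range f from ⟨hf, hxr⟩),
            if_pos hf]
          ring
        · rw [if_neg hxr,
            if_neg (fun h : Function.Injective f ∧ x ∈ Set.range f => hxr h.2), if_pos hf]
          ring
      · rw [if_neg hf, if_neg hf,
          if_neg (fun h : Function.Injective f ∧ x ∈ Set.range f => hf h.1)]
        ring
    rw [hthis, Finset.sum_sub_distrib, ← Finset.mul_sum, ← Finset.mul_sum, mul_sub]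
    rfl
  have hle := cycS_le_opt hm hopt hprob
  rw [hcycS] at hle
  have hid : (1 - d) ^ m * ((1 - d)⁻¹ ^ m) = 1 := by
    rw [← mul_pow, mul_inv_cancel₀ (ne_of_gt hc), one_pow]
  have hexp : (1 - d) ^ m * ((1 - d)⁻¹ ^ m * (cycS μ m - Sx μ m x)) =
      cycS μ m - Sx μ m x := by
    rw [← mul_assoc, hid, one_mul]
  have hmul := mul_le_mul_of_nonneg_left hle (le_of_lt (pow_pos hc m))
  rw [hexp] at hmul
  nlinarith [hmul]

end Aux6

section Aux7
variable {m : ℕ} {X : Type*} [Fintype X] [DecidableEq X]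

lemma Sx_le (hm : 3 ≤ m) {μ : Sym2 X → ℝ} (hμ : IsProbMass μ)
    (hopt : beta μ m = betaSup m) (x : X) :
    2 * Sx μ m x ≤ (m:ℝ) * wdeg μ x * cycS μ m := by
  obtain ⟨h0, hdiag, htot⟩ := hμ
  set T : ℝ := ∑ e : Sym2 X, (if x ∈ e then μ e * De μ m e else 0) with hT
  -- upper bound on T
  have hupper : T ≤ (m:ℝ) * wdeg μ x * cycS μ m := by
    have hstep : T ≤ ∑ e : Sym2 X, (if x ∈ e then μ e * ((m:ℝ) * cycS μ m) else 0) := by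
      refine Finset.sum_le_sum fun e _ => ?_
      split
      · by_cases hdg : e.IsDiag
        · rw [hdiag e hdg, zero_mul, zero_mul]
        · exact mul_le_mul_of_nonneg_left (De_le hm ⟨h0, hdiag, htot⟩ hopt hdg) (h0 e)
      · exact le_refl 0
    have heq : ∑ e : Sym2 X, (if x ∈ e then μ e * ((m:ℝ) * cycS μ m) else 0) =
        (m:ℝ) * wdeg μ x * cycS μ m := by
      have hfac : ∀ e : Sym2 X, (if x ∈ e then μ e * ((m:ℝ) * cycS μ m) else 0) =
          (if x ∈ e then μ e else 0) * ((m:ℝ) * cycS μ m) := by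
        intro e; split
        · rfl
        · rw [zero_mul]
      rw [Finset.sum_congr rfl fun e _ => hfac e, ← Finset.sum_mul,
        sum_ite_mem_eq_wdeg μ hdiag x]
      ring
    linarith
  -- lower bound on T
  have hswap : T = ∑ f : Fin m → X, (if Function.Injective f then
      cycleWeight μ f *
        ((univ.filter fun e : Sym2 X => x ∈ e ∧ e ∈ Finset.image (edgeF f) univ).card : ℝ)
      else 0) := by
    have h1 : T = ∑ e : Sym2 X, ∑ f : Fin m → X,
        (if x ∈ e ∧ Function.Injective f ∧ e ∈ Finset.image (edgeF f) univ
          then cycleWeight μ f else 0) := by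
      rw [hT]
      refine Finset.sum_congr rfl fun e _ => ?_
      by_cases hxe : x ∈ e
      · rw [if_pos hxe, mul_De hm e]
        refine Finset.sum_congr rfl fun f _ => ?_
        by_cases hc : Function.Injective f ∧ e ∈ Finset.image (edgeF f) univ
        · rw [if_pos hc, if_pos ⟨hxe, hc⟩]
        · rw [if_neg hc,
            if_neg (fun h : x ∈ e ∧ Function.Injective f ∧ e ∈ Finset.image (edgeF f) univ =>
              hc h.2)]
      · rw [if_neg hxe]
        refine (Finset.sum_eq_zero fun f _ => ?_).symm
        rw [if_neg (fun h : x ∈ e ∧ Function.Injective f ∧ e ∈ Finset.image (edgeF f) univ =>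
          hxe h.1)]
    rw [h1, Finset.sum_comm]
    refine Finset.sum_congr rfl fun f _ => ?_
    by_cases hf : Function.Injective f
    · rw [if_pos hf]
      have h2 : ∀ e : Sym2 X,
          (if x ∈ e ∧ Function.Injective f ∧ e ∈ Finset.image (edgeF f) univ
            then cycleWeight μ f else 0) =
          (if x ∈ e ∧ e ∈ Finset.image (edgeF f) univ then cycleWeight μ f else 0) := by
        intro e
        by_cases hc : x ∈ e ∧ e ∈ Finset.image (edgeF f) univ
        · rw [if_pos hc, if_pos ⟨hc.1, hf, hc.2⟩]
        · rw [if_neg hc, if_neg (fun h : x ∈ e ∧ Function.Injective f ∧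
            e ∈ Finset.image (edgeF f) univ => hc ⟨h.1, h.2.2⟩)]
      have h3 : (∑ e : Sym2 X, if x ∈ e ∧ Function.Injective f ∧
            e ∈ Finset.image (edgeF f) univ then cycleWeight μ f else 0) =
          ∑ e : Sym2 X, (if x ∈ e ∧ e ∈ Finset.image (edgeF f) univ
            then cycleWeight μ f else 0) :=
        Finset.sum_congr rfl fun e _ => h2 e
      rw [h3]
      rw [Finset.sum_ite]
      rw [Finset.sum_const]
      rw [Finset.sum_const_zero]
      rw [add_zero]
      rw [nsmul_eq_mul]
      ring
    · rw [if_neg hf]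
      refine Finset.sum_eq_zero fun e _ => ?_
      rw [if_neg (fun h : x ∈ e ∧ Function.Injective f ∧ e ∈ Finset.image (edgeF f) univ =>
        hf h.2.1)]
  have hlower : 2 * Sx μ m x ≤ T := by
    rw [hswap, Sx, Finset.mul_sum]
    refine Finset.sum_le_sum fun f _ => ?_
    by_cases hf : Function.Injective f
    · by_cases hxr : x ∈ Set.range f
      · rw [if_pos (show Function.Injective f ∧ x ∈ Set.range f from ⟨hf, hxr⟩), if_pos hf]
        obtain ⟨i₀, hi₀⟩ := hxr
        have hmem1 : edgeF f i₀ ∈ univ.filter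
            fun e : Sym2 X => x ∈ e ∧ e ∈ Finset.image (edgeF f) univ := by
          rw [Finset.mem_filter]
          refine ⟨Finset.mem_univ _, ?_, Finset.mem_image_of_mem _ (Finset.mem_univ i₀)⟩
          rw [edgeF, hi₀]
          exact Sym2.mem_mk_left x _
        have hmem2 : edgeF f (cprev i₀) ∈ univ.filter
            fun e : Sym2 X => x ∈ e ∧ e ∈ Finset.image (edgeF f) univ := by
          rw [Finset.mem_filter]
          refine ⟨Finset.mem_univ _, ?_, Finset.mem_image_of_mem _ (Finset.mem_univ (cprev i₀))⟩
          rw [edgeF, cnext_cprev, hi₀]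
          exact Sym2.mem_mk_right _ x
        have hne : edgeF f i₀ ≠ edgeF f (cprev i₀) := by
          intro hcon
          have := edgeF_injective hm hf hcon
          have h2 := cnext_cprev i₀
          rw [← this] at h2
          exact cnext_ne (by omega) i₀ h2
        have hcard : 2 ≤ ((univ.filter
            fun e : Sym2 X => x ∈ e ∧ e ∈ Finset.image (edgeF f) univ).card : ℝ) := by
          have hsub : {edgeF f i₀, edgeF f (cprev i₀)} ⊆ univ.filter
              fun e : Sym2 X => x ∈ e ∧ e ∈ Finset.image (edgeF f) univ := by
            rw [Finset.insert_subset_iff, Finset.singleton_subset_iff]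
            exact ⟨hmem1, hmem2⟩
          have := Finset.card_le_card hsub
          rw [Finset.card_pair hne] at this
          exact_mod_cast this
        have hcw : 0 ≤ cycleWeight μ f := cycleWeight_nonneg h0 f
        nlinarith [hcard, hcw]
      · rw [if_neg (fun h : Function.Injective f ∧ x ∈ Set.range f => hxr h.2), if_pos hf,
          mul_zero]
        exact mul_nonneg (cycleWeight_nonneg h0 f) (by positivity)
    · rw [if_neg (fun h : Function.Injective f ∧ x ∈ Set.range f => hf h.1), if_neg hf,
        mul_zero]
  linarith

end Aux7

/-- For `m ≥ 3` and `μ ∈ Opt(m)`: if `z ∈ (0, 1)` satisfies `1 - (m/2)·z > (1 - z)^m`,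
then `μ̄(x) > z` for every `x ∈ supp μ̄`. -/
theorem wdeg_lowerbound (m : ℕ) (hm : 3 ≤ m) {X : Type*} [Fintype X] [DecidableEq X]
    (μ : Sym2 X → ℝ) (hμ : IsProbMass μ) (hopt : beta μ m = betaSup m)
    (z : ℝ) (hz : z ∈ Set.Ioo (0 : ℝ) 1) (hineq : 1 - (m : ℝ) / 2 * z > (1 - z) ^ m) :
    ∀ x : X, 0 < wdeg μ x → z < wdeg μ x := by
  intro x hx
  by_contra hzx
  push_neg at hzx
  obtain ⟨hz0, hz1⟩ := hz
  set d := wdeg μ x with hdd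
  have hd1 : d < 1 := lt_of_le_of_lt hzx hz1
  have hmR : (3:ℝ) ≤ (m:ℝ) := by exact_mod_cast hm
  have h2m : (0:ℝ) < 2 * m := by linarith
  -- positivity of cycS
  have hbpos : 0 < beta μ m := hopt ▸ betaSup_pos hm
  have hS : 0 < cycS μ m := by
    rw [beta_eq] at hbpos
    rcases div_pos_iff.1 hbpos with ⟨h1, _⟩ | ⟨_, h2⟩
    · exact h1
    · linarith
  set S := cycS μ m with hSd
  have hdel := deletion hm hμ hopt x hd1
  have hsx := Sx_le hm hμ hopt x
  rw [← hdd, ← hSd] at hdel hsx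
  -- 2 * (1 - (1-d)^m) * S ≤ m * d * S
  have h7 : 2 * (1 - (1 - d) ^ m) ≤ (m:ℝ) * d := by
    have h6 : (2 * (1 - (1 - d) ^ m)) * S ≤ ((m:ℝ) * d) * S := by nlinarith [hdel, hsx]
    exact le_of_mul_le_mul_right h6 hS
  -- convexity step
  set l := d / z with hl
  have hl0 : 0 < l := div_pos hx hz0
  have hl1 : l ≤ 1 := by
    rw [hl, div_le_one hz0]
    exact hzx
  have hlz : l * z = d := div_mul_cancel₀ d (ne_of_gt hz0)
  have hconv := (convexOn_pow (𝕜 := ℝ) m).2 (Set.mem_Ici.2 (by linarith : (0:ℝ) ≤ 1))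
    (Set.mem_Ici.2 (by linarith : (0:ℝ) ≤ 1 - z)) (by linarith : (0:ℝ) ≤ 1 - l)
    (le_of_lt hl0) (by ring)
  rw [smul_eq_mul, smul_eq_mul, smul_eq_mul, smul_eq_mul] at hconv
  have hpt : (1 - l) * 1 + l * (1 - z) = 1 - d := by
    have : (1 - l) * 1 + l * (1 - z) = 1 - l * z := by ring
    rw [this, hlz]
  rw [hpt] at hconv
  dsimp only at hconv
  rw [one_pow] at hconv
  -- hconv : (1 - d)^m ≤ (1 - l) * 1 + l * (1 - z)^m
  have hmono : l * (1 - z) ^ m < l * (1 - (m:ℝ) / 2 * z) :=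
    mul_lt_mul_of_pos_left hineq hl0
  have hrw : l * (1 - (m:ℝ) / 2 * z) = l - (m:ℝ) / 2 * d := by
    have h1 : l * (1 - (m:ℝ) / 2 * z) = l - (m:ℝ) / 2 * (l * z) := by ring
    rw [h1, hlz]
  linarith [hconv, hmono, hrw, h7]
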